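/- For all real numbers p, q with p ≥ 3 and q ≥ 3, each of the three quantities 2(2cos(π/p)cos(π/q) + 1), 2(2cos(π/q) + cos(π/p)), and 2(2cos(π/p) + cos(π/q)) is at least 3, with equality if and only if p = q = 3; moreover for every real q ≥ 5 one has 4cos(π/q) ≥ 4cos(π/5) > 3. Consequently, the shortest figure eight geodesic on a triangle group orbifold with exactly one puncture has |trace| equal to 3 and length 2·arcosh(3/2) = 1.92485…, attained uniquely on the (3,3,∞)-triangle group orbifold. -/

import Mathlib

open Real

/-- The inverse hyperbolic cosine, `arcosh x = log (x + √(x² − 1))` (for `x ≥ 1`). -/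
noncomputable def arcosh (x : ℝ) : ℝ := Real.log (x + Real.sqrt (x ^ 2 - 1))

/-- The set of absolute traces of the hyperbolic elements whose axes project to figure
eight geodesics on one-punctured triangle group orbifolds `O(p,q,∞)`. -/
noncomputable def fig8TracesOnePuncture : Set ℝ :=
  {x : ℝ | ∃ q : ℤ, 5 ≤ q ∧ x = 4 * Real.cos (π / q)} ∪
    {x : ℝ | ∃ p q : ℤ, 3 ≤ p ∧ p ≤ q ∧
      (x = 2 * (2 * Real.cos (π / p) * Real.cos (π / q) + 1) ∨
        x = 2 * (2 * Real.cos (π / q) + Real.cos (π / p)) ∨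
        x = 2 * (2 * Real.cos (π / p) + Real.cos (π / q)))}

lemma cos_mono_aux {c p : ℝ} (hc : 1 ≤ c) (hp : c ≤ p) :
    Real.cos (π / c) ≤ Real.cos (π / p) := by
  have hc0 : 0 < c := by linarith
  have hp0 : 0 < p := by linarith
  have h1 : π / p ≤ π / c := div_le_div_of_nonneg_left Real.pi_pos.le hc0 hp
  have h2 : 0 < π / p := div_pos Real.pi_pos hp0
  have h3 : π / c ≤ π := by
    rw [div_le_iff₀ hc0]; nlinarith [Real.pi_pos]
  exact Real.cos_le_cos_of_nonneg_of_le_pi h2.le h3 h1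

lemma cos_aux {p : ℝ} (hp : 3 ≤ p) :
    1/2 ≤ Real.cos (π / p) ∧ (Real.cos (π / p) = 1/2 ↔ p = 3) := by
  have h := cos_mono_aux (by norm_num : (1:ℝ) ≤ 3) hp
  rw [Real.cos_pi_div_three] at h
  refine ⟨h, ⟨fun he => ?_, fun he => by rw [he, Real.cos_pi_div_three]⟩⟩
  by_contra h3
  have hp3 : 3 < p := lt_of_le_of_ne hp (Ne.symm h3)
  have hp0 : 0 < p := by linarith
  have h1 : π / p < π / 3 := div_lt_div_of_pos_left Real.pi_pos (by norm_num) hp3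
  have h2 : 0 < π / p := div_pos Real.pi_pos hp0
  have h3' : π / 3 ≤ π := by nlinarith [Real.pi_pos]
  have := Real.cos_lt_cos_of_nonneg_of_le_pi h2.le h3' h1
  rw [Real.cos_pi_div_three] at this
  linarith [he ▸ this]

lemma main_aux (p q : ℝ) (hp : 3 ≤ p) (hq : 3 ≤ q) :
    (3 ≤ 2 * (2 * Real.cos (π / p) * Real.cos (π / q) + 1) ∧
        (2 * (2 * Real.cos (π / p) * Real.cos (π / q) + 1) = 3 ↔ p = 3 ∧ q = 3)) ∧
      (3 ≤ 2 * (2 * Real.cos (π / q) + Real.cos (π / p)) ∧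
        (2 * (2 * Real.cos (π / q) + Real.cos (π / p)) = 3 ↔ p = 3 ∧ q = 3)) ∧
      (3 ≤ 2 * (2 * Real.cos (π / p) + Real.cos (π / q)) ∧
        (2 * (2 * Real.cos (π / p) + Real.cos (π / q)) = 3 ↔ p = 3 ∧ q = 3)) := by
  obtain ⟨ha, hia⟩ := cos_aux hp
  obtain ⟨hb, hib⟩ := cos_aux hq
  set a := Real.cos (π / p)
  set b := Real.cos (π / q)
  refine ⟨⟨by nlinarith, ⟨fun he => ?_, fun he => ?_⟩⟩,
    ⟨by nlinarith, ⟨fun he => ?_, fun he => ?_⟩⟩,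
    ⟨by nlinarith, ⟨fun he => ?_, fun he => ?_⟩⟩⟩
  · have ha' : a = 1/2 := by nlinarith
    have hb' : b = 1/2 := by nlinarith
    exact ⟨hia.mp ha', hib.mp hb'⟩
  · rw [hia.mpr he.1, hib.mpr he.2]; ring
  · have ha' : a = 1/2 := by linarith
    have hb' : b = 1/2 := by linarith
    exact ⟨hia.mp ha', hib.mp hb'⟩
  · rw [hia.mpr he.1, hib.mpr he.2]; ring
  · have ha' : a = 1/2 := by linarith
    have hb' : b = 1/2 := by linarith
    exact ⟨hia.mp ha', hib.mp hb'⟩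
  · rw [hia.mpr he.1, hib.mpr he.2]; ring

lemma five_aux : 3 < 4 * Real.cos (π / 5) := by
  rw [Real.cos_pi_div_five]
  nlinarith [Real.sq_sqrt (by norm_num : (5:ℝ) ≥ 0), Real.sqrt_nonneg 5]

theorem stmt_15 :
    (∀ p q : ℝ, 3 ≤ p → 3 ≤ q →
      (3 ≤ 2 * (2 * Real.cos (π / p) * Real.cos (π / q) + 1) ∧
        (2 * (2 * Real.cos (π / p) * Real.cos (π / q) + 1) = 3 ↔ p = 3 ∧ q = 3)) ∧
      (3 ≤ 2 * (2 * Real.cos (π / q) + Real.cos (π / p)) ∧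
        (2 * (2 * Real.cos (π / q) + Real.cos (π / p)) = 3 ↔ p = 3 ∧ q = 3)) ∧
      (3 ≤ 2 * (2 * Real.cos (π / p) + Real.cos (π / q)) ∧
        (2 * (2 * Real.cos (π / p) + Real.cos (π / q)) = 3 ↔ p = 3 ∧ q = 3))) ∧
    (∀ q : ℝ, 5 ≤ q → 4 * Real.cos (π / 5) ≤ 4 * Real.cos (π / q)) ∧
    3 < 4 * Real.cos (π / 5) ∧
    IsLeast fig8TracesOnePuncture 3 ∧
    (∀ p q : ℤ, 3 ≤ p → p ≤ q →
      ((2 * (2 * Real.cos (π / p) * Real.cos (π / q) + 1) = 3 ∨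
        2 * (2 * Real.cos (π / q) + Real.cos (π / p)) = 3 ∨
        2 * (2 * Real.cos (π / p) + Real.cos (π / q)) = 3) ↔ p = 3 ∧ q = 3)) ∧
    2 * Real.cosh (2 * _root_.arcosh (3 / 2) / 2) = 3 := by
  refine ⟨main_aux, fun q hq => by
      have := cos_mono_aux (by norm_num : (1:ℝ) ≤ 5) hq; linarith,
    five_aux, ⟨?_, ?_⟩, ?_, ?_⟩
  · -- 3 ∈ fig8TracesOnePuncture
    refine Or.inr ⟨3, 3, by norm_num, by norm_num, Or.inl ?_⟩
    push_cast
    rw [Real.cos_pi_div_three]; ring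
  · -- lower bound
    rintro x (⟨q, hq, rfl⟩ | ⟨p, q, hp, hpq, hx⟩)
    · have hq' : (5:ℝ) ≤ (q:ℝ) := by exact_mod_cast hq
      have := cos_mono_aux (by norm_num : (1:ℝ) ≤ 5) hq'
      linarith [five_aux]
    · have hp' : (3:ℝ) ≤ (p:ℝ) := by exact_mod_cast hp
      have hq' : (3:ℝ) ≤ (q:ℝ) := by
        have : (p:ℝ) ≤ (q:ℝ) := by exact_mod_cast hpq
        linarith
      obtain ⟨⟨h1, _⟩, ⟨h2, _⟩, ⟨h3, _⟩⟩ := main_aux (p:ℝ) (q:ℝ) hp' hq'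
      rcases hx with rfl | rfl | rfl <;> assumption
  · -- integer iff
    intro p q hp hpq
    have hp' : (3:ℝ) ≤ (p:ℝ) := by exact_mod_cast hp
    have hq' : (3:ℝ) ≤ (q:ℝ) := by
      have : (p:ℝ) ≤ (q:ℝ) := by exact_mod_cast hpq
      linarith
    obtain ⟨⟨_, e1⟩, ⟨_, e2⟩, ⟨_, e3⟩⟩ := main_aux (p:ℝ) (q:ℝ) hp' hq'
    constructor
    · rintro (h | h | h)
      · obtain ⟨h1, h2⟩ := e1.mp h
        exact ⟨by exact_mod_cast h1, by exact_mod_cast h2⟩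
      · obtain ⟨h1, h2⟩ := e2.mp h
        exact ⟨by exact_mod_cast h1, by exact_mod_cast h2⟩
      · obtain ⟨h1, h2⟩ := e3.mp h
        exact ⟨by exact_mod_cast h1, by exact_mod_cast h2⟩
    · rintro ⟨rfl, rfl⟩
      exact Or.inl (e1.mpr ⟨by norm_num, by norm_num⟩)
  · -- cosh computation
    have hs : Real.sqrt ((3/2:ℝ) ^ 2 - 1) = Real.sqrt 5 / 2 := by
      rw [show (3/2:ℝ)^2 - 1 = (Real.sqrt 5 / 2)^2 by
        have h5 := Real.sq_sqrt (show (0:ℝ) ≤ 5 by norm_num); nlinarith]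
      exact Real.sqrt_sq (by positivity)
    have harg : (3/2 : ℝ) + Real.sqrt ((3/2:ℝ) ^ 2 - 1) = (3 + Real.sqrt 5) / 2 := by
      rw [hs]; ring
    have hpos : (0:ℝ) < (3 + Real.sqrt 5) / 2 := by positivity
    rw [show 2 * _root_.arcosh (3/2) / 2 = _root_.arcosh (3/2) by ring, _root_.arcosh, harg,
      Real.cosh_log hpos]
    have h5 := Real.sq_sqrt (show (0:ℝ) ≤ 5 by norm_num)
    have ht : (0:ℝ) < 3 + Real.sqrt 5 := by positivity
    field_simp
    nlinarith [h5]
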